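/- For every integer n ≥ 1, a_{2n+1} := 2[ζ(2n+1) − (1 − 2^{−2n−1})ζ(2n+2)] satisfies a_{2n+1} > 4^{−n} ζ(2n+2) > 0. -/

import Mathlib

noncomputable def zetaR (n : ℕ) : ℝ := ∑' k : ℕ, (1 : ℝ) / (k + 1) ^ n

lemma zsummable {m : ℕ} (hm : 2 ≤ m) :
    Summable (fun k : ℕ => (1 : ℝ) / (k + 1) ^ m) := by
  have h1 : Summable (fun n : ℕ => (1 : ℝ) / (n : ℝ) ^ m) :=
    Real.summable_one_div_nat_pow.mpr (lt_of_lt_of_le one_lt_two hm)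
  have h2 := (summable_nat_add_iff 1).mpr h1
  refine h2.congr fun k => ?_
  push_cast
  ring

lemma zpos {m : ℕ} (hm : 2 ≤ m) : 0 < zetaR m := by
  refine Summable.tsum_pos (zsummable hm) (fun k => by positivity) 0 (by positivity)

lemma zlt {m : ℕ} (hm : 2 ≤ m) : zetaR (m + 1) < zetaR m := by
  refine Summable.tsum_lt_tsum (i := 1) (fun k => ?_) ?_ (zsummable (by omega)) (zsummable hm)
  · apply one_div_le_one_div_of_le (by positivity)
    exact pow_le_pow_right₀ (by push_cast; linarith [Nat.cast_nonneg (α := ℝ) k]) (by omega)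
  · apply one_div_lt_one_div_of_lt (by positivity)
    norm_num
    exact pow_lt_pow_right₀ (by norm_num) (by omega)

theorem a_odd_pos (n : ℕ) (hn : 1 ≤ n) :
    2 * (zetaR (2 * n + 1) - (1 - 1 / 2 ^ (2 * n + 1)) * zetaR (2 * n + 2)) >
      zetaR (2 * n + 2) / 4 ^ n ∧ zetaR (2 * n + 2) / 4 ^ n > 0 := by
  have hB : 0 < zetaR (2 * n + 2) := zpos (by omega)
  have hlt : zetaR (2 * n + 2) < zetaR (2 * n + 1) := zlt (by omega)
  have h4 : (0:ℝ) < 4 ^ n := by positivity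
  have hx : (2:ℝ) ^ (2 * n + 1) = 2 * 4 ^ n := by
    rw [pow_succ, pow_mul]; norm_num; ring
  constructor
  · have key : 2 * (zetaR (2 * n + 1) - (1 - 1 / 2 ^ (2 * n + 1)) * zetaR (2 * n + 2))
        - zetaR (2 * n + 2) / 4 ^ n
        = 2 * (zetaR (2 * n + 1) - zetaR (2 * n + 2)) := by
      rw [hx]; field_simp; ring
    nlinarith [key]
  · positivity
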